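/- Under the run invariant, if c_j > c_s then c_k^{l_k} ⋯ c_{j-1}^{l_{j-1}} c_j^{l_j} ∈ L', and moreover its longest border is the empty word (so the invariant holds for j+1 with ℓ' = 0). -/

import Mathlib

variable {α : Type*}

/-- The rotation `rot(w,i) = w[i..|w|-1] w[0..i-1]`. -/
def rot (w : List α) (i : ℕ) : List α := w.drop i ++ w.take i

/-- A Lyndon word: a nonempty word strictly smaller than all of its proper rotations. -/
def IsLyndon [LinearOrder α] (w : List α) : Prop :=
  w ≠ [] ∧ ∀ i, 0 < i → i < w.length → w < rot w i

/-- `IsCFL w f` : `f` is the Chen–Fox–Lyndon factorization of `w`, i.e. a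
nonincreasing sequence of Lyndon words whose concatenation is `w`. -/
def IsCFL [LinearOrder α] (w : List α) (f : List (List α)) : Prop :=
  f.flatten = w ∧ (∀ x ∈ f, IsLyndon x) ∧ f.Chain' (· ≥ ·)

/-- `u^k` : the `k`-fold concatenation of the word `u`. -/
def listPow (u : List α) (k : ℕ) : List α := (List.replicate k u).flatten

/-- `P`: the set of nonempty prefixes of Lyndon words. -/
def InP [LinearOrder α] (w : List α) : Prop :=
  w ≠ [] ∧ ∃ u : List α, IsLyndon (w ++ u)

/-- `P' = P ∪ { c^k : k ≥ 2 }` where `c` is the maximum symbol of the alphabet. -/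
def InP' [LinearOrder α] (w : List α) : Prop :=
  InP w ∨ ∃ (c : α) (k : ℕ), 2 ≤ k ∧ (∀ a : α, a ≤ c) ∧ w = List.replicate k c

/-- A border of `w`: a proper prefix of `w` that is also a suffix of `w`. -/
def IsBorder (b w : List α) : Prop := b <+: w ∧ b <:+ w ∧ b.length < w.length

/-- The length of the longest common prefix of two words. -/
def lcpLen [DecidableEq α] : List α → List α → ℕ
  | a :: u, b :: v => if a = b then lcpLen u v + 1 else 0
  | _, _ => 0


/-- The number of runs in the run-length encoding of a word: the length of the
list obtained by collapsing consecutive equal symbols. -/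
def numRuns [DecidableEq α] (w : List α) : ℕ := (w.destutter (· ≠ ·)).length

/-- An LR word: either a Lyndon word or a power `a^k` (`k ≥ 2`) of a single symbol. -/
def IsLR [LinearOrder α] (w : List α) : Prop :=
  IsLyndon w ∨ ∃ (a : α) (k : ℕ), 2 ≤ k ∧ w = List.replicate k a

/-- The word `c_k^{l_k} c_{k+1}^{l_{k+1}} ⋯ c_{j-1}^{l_{j-1}}` determined by the
runs `(c_t, l_t)` for `k ≤ t < j`. -/
def runWord (c : ℕ → α) (l : ℕ → ℕ) (k j : ℕ) : List α :=
  ((List.range (j - k)).map (fun t => List.replicate (l (k + t)) (c (k + t)))).flatten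

section AuxLemmas

variable [LinearOrder α]

theorem myPrefix_of_getElem (A B : List α) (hlen : A.length ≤ B.length)
    (h : ∀ r (hr : r < A.length), A[r] = B[r]'(lt_of_lt_of_le hr hlen)) : A <+: B := by
  have : A = B.take A.length := by
    apply List.ext_getElem
    · simp [hlen]
    · intro i h1 h2
      rw [List.getElem_take]
      exact h i h1
  rw [this]; exact List.take_prefix _ _

theorem lex_of_getElem {A B : List α} {q : ℕ} (hqA : q < A.length) (hqB : q < B.length)
    (hags : ∀ r (hr : r < q), A[r]'(by omega) = B[r]'(by omega))
    (hlt : A[q] < B[q]) : A < B := by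
  show List.Lex (· < ·) A B
  induction q generalizing A B with
  | zero =>
    match A, B with
    | a :: A', b :: B' => exact List.Lex.rel hlt
  | succ n ih =>
    match A, B with
    | a :: A', b :: B' =>
      have h0 : a = b := hags 0 (by omega)
      subst h0
      apply List.Lex.cons
      apply ih (by simpa using hqA) (by simpa using hqB)
      · intro r hr
        exact hags (r+1) (by omega)
      · exact hlt

theorem lex_cases {A B : List α} (h : A < B) :
    (A.length < B.length ∧ A <+: B) ∨
      ∃ q, ∃ (hqA : q < A.length) (hqB : q < B.length),
        (∀ r (hr : r < q), A[r]'(by omega) = B[r]'(by omega)) ∧ A[q] < B[q] := by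
  have h' : List.Lex (· < ·) A B := h
  clear h
  induction h' with
  | @nil b l => left; exact ⟨by simp, by simp⟩
  | @cons a l₁ l₂ h ih =>
    rcases ih with ⟨h1, h2⟩ | ⟨q, hqA, hqB, hag, hlt⟩
    · left; exact ⟨by simpa using h1, by simpa using h2⟩
    · right
      refine ⟨q+1, by simpa using hqA, by simpa using hqB, ?_, by simpa using hlt⟩
      intro r hr
      match r with
      | 0 => rfl
      | r+1 => simpa using hag r (by omega)
  | @rel a l₁ b l₂ hab =>
    right
    exact ⟨0, by simp, by simp, by omega, by simpa using hab⟩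

theorem append_lt_append_left_iff (l A B : List α) : l ++ A < l ++ B ↔ A < B := by
  induction l with
  | nil => rfl
  | cons a l ih =>
    show List.Lex _ _ _ ↔ _
    rw [List.cons_append, List.cons_append]
    constructor
    · intro h
      rcases h with _ | h | h
      · exact absurd ‹a < a› (lt_irrefl a)
      · exact ih.mp h
    · intro h
      exact List.Lex.cons (ih.mpr h)

/-- A border of a word gives a periodicity relation. -/
theorem border_period {T w : List α} (hT : IsBorder T w) {r : ℕ}
    (hr : r + (w.length - T.length) < w.length) :
    w[r]'(by omega) = w[r + (w.length - T.length)]'(hr) := by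
  obtain ⟨hpre, hsuf, hlen⟩ := hT
  have hrT : r < T.length := by omega
  have h1 : T[r]'hrT = w[r] := hpre.getElem hrT
  have h2 : T[r]'hrT = w[w.length - T.length + r] := hsuf.getElem hrT
  rw [← h1, h2]
  congr 1
  omega

/-- Lyndon words are unbordered. -/
theorem IsLyndon.unbordered {w T : List α} (hw : IsLyndon w) (hT : IsBorder T w) : T = [] := by
  by_contra hne
  obtain ⟨⟨u, hu⟩, ⟨v, hv⟩, hlen⟩ := hT
  have hTpos : 0 < T.length := List.length_pos_iff.mpr hne
  have hul : T.length + u.length = w.length := by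
    have h1 := congrArg List.length hu; simpa using h1
  have hvl : v.length + T.length = w.length := by
    have h2 := congrArg List.length hv; simpa using h2
  have huv : u.length = v.length := by omega
  have hvpos : 0 < v.length := by omega
  -- rotation by |v| : w < T ++ v
  have h1 : w < T ++ v := by
    have e : rot w v.length = T ++ v := by rw [← hv, rot, List.drop_left, List.take_left]
    have := hw.2 v.length hvpos (by omega)
    rwa [e] at this
  -- rotation by |T| : w < u ++ T
  have h2 : w < u ++ T := by
    have e : rot w T.length = u ++ T := by rw [← hu, rot, List.drop_left, List.take_left]
    have := hw.2 T.length hTpos (by omega)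
    rwa [e] at this
  rw [← hu, append_lt_append_left_iff] at h1
  rw [← hv] at h2
  rcases lex_cases h1 with ⟨hl, _⟩ | ⟨q, hqA, hqB, hag, hlt⟩
  · omega
  rcases lex_cases h2 with ⟨hl, _⟩ | ⟨q2, hq2A, hq2B, hag2, hlt2⟩
  · simp at hl; omega
  rcases lt_or_ge q2 v.length with hq2v | hq2v
  case inr =>
    -- then u = v, so v ++ T = u ++ T, contradicting the strict mismatch
    have huveq : u = v := by
      apply List.ext_getElem (by omega)
      intro r h1 h2
      have := hag2 r (by omega)
      rw [List.getElem_append_left (by omega : r < v.length),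
          List.getElem_append_left (by omega : r < u.length)] at this
      exact this.symm
    subst huveq
    exact absurd hlt2 (lt_irrefl _)
  have e1 : (v ++ T)[q2]'hq2A = v[q2]'hq2v := List.getElem_append_left hq2v
  have e2 : (u ++ T)[q2]'hq2B = u[q2]'(by omega) := List.getElem_append_left (by omega)
  rw [e1, e2] at hlt2
  rcases lt_trichotomy q2 q with h | h | h
  · have := hag q2 h
    rw [this] at hlt2
    exact absurd hlt2 (lt_irrefl _)
  · subst h
    exact absurd (hlt.trans hlt2) (lt_irrefl _)
  · have := hag2 q (by omega)
    rw [List.getElem_append_left (by omega : q < v.length),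
        List.getElem_append_left (by omega : q < u.length)] at this
    exact absurd hlt (not_lt.mpr (le_of_eq this))

theorem ge_congr (w : List α) {a b : ℕ} (h : a = b) {ha : a < w.length} :
    w[a]'ha = w[b]'(h ▸ ha) := by subst h; rfl

theorem IsLyndon.lt_drop {w : List α} (hw : IsLyndon w) {i : ℕ} (h0 : 0 < i)
    (hi : i < w.length) : w < w.drop i := by
  have h := hw.2 i h0 hi
  rcases lex_cases h with ⟨hl, _⟩ | ⟨q, hqA, hqB, hag, hlt⟩
  · rw [rot] at hl; simp at hl; omega
  have hdl : (rot w i).length = w.length := by rw [rot]; simp; omega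
  rcases lt_or_ge q (w.length - i) with hq | hq
  · -- mismatch inside the drop part
    apply lex_of_getElem hqA (by simp; omega)
    · intro r hr
      exact (hag r hr).trans (List.getElem_append_left (by simp; omega))
    · have e : (rot w i)[q]'(by rw [hdl]; omega) = (w.drop i)[q]'(by simp; omega) :=
        List.getElem_append_left (by simp; omega)
      exact lt_of_lt_of_le hlt (le_of_eq e)
  · -- drop w i would be a border; contradiction
    exfalso
    have hpre : w.drop i <+: w := by
      apply myPrefix_of_getElem _ _ (by simp)
      intro r hr
      have hr' : r < w.length - i := by simp at hr; omega
      exact ((hag r (by omega)).trans (List.getElem_append_left (by simp; omega))).symm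
    have hbord : IsBorder (w.drop i) w := ⟨hpre, List.drop_suffix _ _, by simp; omega⟩
    have := hw.unbordered hbord
    have hl := congrArg List.length this
    simp at hl
    omega

theorem isLyndon_of_lt_drop {w : List α} (hne : w ≠ [])
    (h : ∀ i, 0 < i → i < w.length → w < w.drop i) : IsLyndon w := by
  refine ⟨hne, fun i h0 hi => ?_⟩
  have hd := h i h0 hi
  rcases lex_cases hd with ⟨hl, _⟩ | ⟨q, hqA, hqB, hag, hlt⟩
  · simp at hl; omega
  have hq : q < w.length - i := by simpa using hqB
  apply lex_of_getElem hqA (by simp [rot]; omega)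
  · intro r hr
    exact (hag r hr).trans (List.getElem_append_left (by simp; omega)).symm
  · have e : (rot w i)[q]'(by simp [rot]; omega) = (w.drop i)[q]'hqB :=
      List.getElem_append_left (by simp; omega)
    exact lt_of_lt_of_le hlt (le_of_eq e.symm)

/-- The suffix dichotomy for prefixes of Lyndon words. -/
theorem inP_suffix_cases {w : List α} (hw : InP w) {i : ℕ} (h0 : 0 < i) (hi : i < w.length) :
    (w.drop i <+: w) ∨ ∃ q, ∃ (hq : q + i < w.length),
      (∀ r (hr : r < q), w[r]'(by omega) = w[r+i]'(by omega)) ∧ w[q]'(by omega) < w[q+i]'hq := by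
  obtain ⟨hne, u, hL⟩ := hw
  set W := w ++ u with hW
  have hwW : w.length ≤ W.length := by simp [hW]
  have hlt := hL.lt_drop h0 (by omega)
  rcases lex_cases hlt with ⟨hl, _⟩ | ⟨q, hqA, hqB, hag, hlt'⟩
  · simp at hl; omega
  have hqd : q < W.length - i := by simpa using hqB
  have key : ∀ r, r < q → ∀ (h1 : r < W.length) (h2 : i + r < W.length), W[r]'h1 = W[i+r]'h2 := by
    intro r hr h1 h2
    have := hag r hr
    rwa [List.getElem_drop] at this
  have keyq : W[q]'(by omega) < W[i+q]'(by omega) := by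
    have := hlt'
    rwa [List.getElem_drop] at this
  rcases lt_or_ge (q + i) w.length with hc | hc
  · right
    refine ⟨q, hc, ?_, ?_⟩
    · intro r hr
      have e1 : w[r]'(by omega) = W[r]'(by omega) := (List.getElem_append_left (by omega)).symm
      have e2 : w[r+i]'(by omega) = W[i+r]'(by omega) :=
        (ge_congr w (show r+i = i+r by omega)).trans (List.getElem_append_left (by omega)).symm
      exact (e1.trans (key r hr _ _)).trans e2.symm
    · have e1 : w[q]'(by omega) = W[q]'(by omega) := (List.getElem_append_left (by omega)).symm
      have e2 : w[q+i]'(by omega) = W[i+q]'(by omega) :=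
        (ge_congr w (show q+i = i+q by omega)).trans (List.getElem_append_left (by omega)).symm
      exact lt_of_le_of_lt (le_of_eq e1) (lt_of_lt_of_le keyq (le_of_eq e2.symm))
  · left
    apply myPrefix_of_getElem _ _ (by simp)
    intro r hr
    have hr' : r < w.length - i := by simpa using hr
    have e : (w.drop i)[r]'hr = w[i+r]'(by omega) := List.getElem_drop
    rw [e]
    have h1 : W[r]'(by omega) = W[i+r]'(by omega) := key r (by omega) _ _
    have e1 : w[r]'(by omega) = W[r]'(by omega) := (List.getElem_append_left (by omega)).symm
    have e2 : w[i+r]'(by omega) = W[i+r]'(by omega) := (List.getElem_append_left (by omega)).symm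
    rw [e2, ← h1, ← e1]

/-- The first letter of a prefix of a Lyndon word is minimal. -/
theorem inP_first_le {w : List α} (hw : InP w) {r : ℕ} (hr : r < w.length) :
    w[0]'(by omega) ≤ w[r]'hr := by
  rcases Nat.eq_zero_or_pos r with h | h
  · subst h; exact le_refl _
  rcases inP_suffix_cases hw h hr with hpre | ⟨q, hq, hag, hlt⟩
  · have e : (w.drop r)[0]'(by simp; omega) = w[r]'(by omega) := by
      rw [List.getElem_drop]; exact ge_congr w (by omega)
    have e2 : (w.drop r)[0]'(by simp; omega) = w[0]'(by omega) := hpre.getElem _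
    rw [← e, e2]
  · rcases Nat.eq_zero_or_pos q with h0 | h0
    · subst h0
      exact le_of_lt (lt_of_lt_of_le hlt (le_of_eq (ge_congr w (by omega))))
    · have := hag 0 h0
      exact le_of_eq (this.trans (ge_congr w (by omega)))

/-- Monotonicity of the critical letter along borders (the key combinatorial lemma). -/
theorem inP_border_mono {w T B : List α} (hw : InP w) (hT : IsBorder T w) (hB : IsBorder B w)
    (hlt : T.length < B.length) :
    w[T.length]'(by have := hB.2.2; omega) ≤ w[B.length]'(hB.2.2) := by
  have hBw : B.length < w.length := hB.2.2
  set d := B.length - T.length with hd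
  have hd0 : 0 < d := by omega
  have hdw : d < w.length := by omega
  rcases inP_suffix_cases hw hd0 hdw with hpre | ⟨q, hq, hag, hlt'⟩
  · -- drop w d is a prefix: positions T.length and B.length carry equal letters
    have e : (w.drop d)[T.length]'(by simp; omega) = w[d + T.length]'(by omega) :=
      List.getElem_drop
    have e2 : (w.drop d)[T.length]'(by simp; omega) = w[T.length]'(by omega) :=
      hpre.getElem _
    rw [← e2, e]
    exact le_of_eq (ge_congr w (by omega))
  · rcases lt_trichotomy q T.length with hc | hc | hc
    · -- impossible: both periods give a contradiction
      exfalso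
      have h1 : w[q+d]'(by omega) = w[(q+d) + (w.length - B.length)]'(by omega) :=
        border_period hB (by omega)
      have h2 : w[q]'(by omega) = w[q + (w.length - T.length)]'(by omega) :=
        border_period hT (by omega)
      have e3 : w[(q+d) + (w.length - B.length)]'(by omega) = w[q + (w.length - T.length)]'(by omega) :=
        ge_congr w (by omega)
      rw [h1, e3, ← h2] at hlt'
      exact absurd hlt' (lt_irrefl _)
    · subst hc
      exact le_of_lt (lt_of_lt_of_le hlt' (le_of_eq (ge_congr w (by omega))))
    · have := hag T.length hc
      exact le_of_eq (this.trans (ge_congr w (by omega)))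

/-- Extending a prefix of a Lyndon word by a power of a strictly dominating letter
gives a Lyndon word. -/
theorem lyndon_extend {w : List α} (hw : InP w) {B : List α} (hB : IsBorder B w)
    (hmax : ∀ T, IsBorder T w → T.length ≤ B.length) {a : α}
    (ha : w[B.length]'(hB.2.2) < a) {m : ℕ} (hm : 1 ≤ m) :
    IsLyndon (w ++ List.replicate m a) := by
  have hwne : w ≠ [] := hw.1
  have hw0 : 0 < w.length := List.length_pos_iff.mpr hwne
  have hBw : B.length < w.length := hB.2.2
  set W := w ++ List.replicate m a with hW
  have hWl : W.length = w.length + m := by simp [hW]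
  apply isLyndon_of_lt_drop (by simp [hW, hwne])
  intro i h0 hi
  rcases le_or_gt w.length i with hc | hc
  · -- suffix inside the replicate part
    apply lex_of_getElem (show 0 < W.length by omega) (show 0 < (W.drop i).length by simp; omega)
    · intro r hr; omega
    · have e0 : W[0]'(by omega) = w[0]'(by omega) := List.getElem_append_left (by omega)
      have e1 : (W.drop i)[0]'(by simp; omega) = W[i+0]'(by omega) := List.getElem_drop
      have e2 : W[i+0]'(by omega) = a := by
        have : W[i+0]'(by omega) = (List.replicate m a)[i+0 - w.length]'(by simp at hi ⊢; omega) :=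
          List.getElem_append_right (by omega)
        rw [this, List.getElem_replicate]
      rw [e0, e1, e2]
      exact lt_of_le_of_lt (inP_first_le hw hBw) ha
  · -- suffix starting inside w
    have hdropW : W.drop i = w.drop i ++ List.replicate m a := by
      rw [hW, List.drop_append_of_le_length (le_of_lt hc)]
    rcases inP_suffix_cases hw h0 hc with hpre | ⟨q, hq, hag, hlt'⟩
    · -- border case
      have hbord : IsBorder (w.drop i) w := ⟨hpre, List.drop_suffix _ _, by simp; omega⟩
      have hTB : (w.drop i).length ≤ B.length := hmax _ hbord
      have hTlen : (w.drop i).length = w.length - i := by simp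
      -- w[|T'|] ≤ w[|B|]
      have hkey : w[w.length - i]'(by omega) < a := by
        rcases eq_or_lt_of_le hTB with heq | hlt2
        · have : w.length - i = B.length := by omega
          exact lt_of_le_of_lt (le_of_eq (ge_congr w this)) ha
        · refine lt_of_le_of_lt ?_ ha
          have h5 := inP_border_mono hw hbord hB (by omega)
          exact le_trans (le_of_eq (ge_congr w hTlen.symm)) h5
      apply lex_of_getElem (show w.length - i < W.length by omega)
        (show w.length - i < (W.drop i).length by simp; omega)
      · intro r hr
        have e1 : W[r]'(by omega) = w[r]'(by omega) := List.getElem_append_left (by omega)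
        have e2 : (W.drop i)[r]'(by simp; omega) = W[i+r]'(by omega) := List.getElem_drop
        have e3 : W[i+r]'(by omega) = w[i+r]'(by omega) := List.getElem_append_left (by omega)
        have e4 : (w.drop i)[r]'(by simp; omega) = w[i+r]'(by omega) := List.getElem_drop
        have e5 : (w.drop i)[r]'(by simp; omega) = w[r]'(by omega) := hpre.getElem _
        rw [e1, e2, e3, ← e4, e5]
      · have e1 : W[w.length - i]'(by omega) = w[w.length - i]'(by omega) :=
          List.getElem_append_left (by omega)
        have e2 : (W.drop i)[w.length - i]'(by simp; omega) = W[i + (w.length - i)]'(by omega) :=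
          List.getElem_drop
        have e3 : W[i + (w.length - i)]'(by omega) = a := by
          have : W[i + (w.length - i)]'(by omega)
              = (List.replicate m a)[i + (w.length - i) - w.length]'(by simp; omega) :=
            List.getElem_append_right (by omega)
          rw [this, List.getElem_replicate]
        rw [e1, e2, e3]
        exact hkey
    · -- strict mismatch case
      apply lex_of_getElem (show q < W.length by omega)
        (show q < (W.drop i).length by simp; omega)
      · intro r hr
        have e1 : W[r]'(by omega) = w[r]'(by omega) := List.getElem_append_left (by omega)
        have e2 : (W.drop i)[r]'(by simp; omega) = W[i+r]'(by omega) := List.getElem_drop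
        have e3 : W[i+r]'(by omega) = w[i+r]'(by omega) := List.getElem_append_left (by omega)
        have e4 : w[i+r]'(by omega) = w[r+i]'(by omega) := ge_congr w (by omega)
        rw [e1, e2, e3, e4]
        exact hag r hr
      · have e1 : W[q]'(by omega) = w[q]'(by omega) := List.getElem_append_left (by omega)
        have e2 : (W.drop i)[q]'(by simp; omega) = W[i+q]'(by omega) := List.getElem_drop
        have e3 : W[i+q]'(by omega) = w[i+q]'(by omega) := List.getElem_append_left (by omega)
        have e4 : w[i+q]'(by omega) = w[q+i]'(by omega) := ge_congr w (by omega)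
        rw [e1, e2, e3, e4]
        exact hlt'

/-! ### runWord structure -/

section RunWord
variable (c : ℕ → α) (l : ℕ → ℕ)

theorem runWord_nil (k : ℕ) : runWord c l k k = [] := by simp [runWord]

theorem runWord_succ {k j : ℕ} (hkj : k ≤ j) :
    runWord c l k (j+1) = runWord c l k j ++ List.replicate (l j) (c j) := by
  unfold runWord
  have h1 : j + 1 - k = (j - k) + 1 := by omega
  rw [h1, List.range_succ, List.map_append, List.flatten_append]
  congr 1
  have h2 : k + (j - k) = j := by omega
  simp [h2]

theorem runWord_cons {k j : ℕ} (hkj : k < j) :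
    runWord c l k j = List.replicate (l k) (c k) ++ runWord c l (k+1) j := by
  unfold runWord
  have h1 : j - k = (j - (k+1)) + 1 := by omega
  rw [h1, List.range_succ_eq_map, List.map_cons, List.flatten_cons, List.map_map]
  congr 2
  apply List.map_congr_left
  intro t _
  have e : k + (t+1) = k + 1 + t := by omega
  simp [Function.comp, e]

theorem runWord_split {k t j : ℕ} (hkt : k ≤ t) (htj : t ≤ j) :
    runWord c l k j = runWord c l k t ++ runWord c l t j := by
  induction j, htj using Nat.le_induction with
  | base => rw [runWord_nil, List.append_nil]
  | succ j htj ih =>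
    rw [runWord_succ c l (by omega : k ≤ j), ih, runWord_succ c l htj, List.append_assoc]

theorem runWord_length_ge {k j : ℕ} (hkj : k < j) : l k ≤ (runWord c l k j).length := by
  rw [runWord_cons c l hkj]; simp

theorem runWord_length_ge2 {k j : ℕ} (hkj : k + 2 ≤ j) :
    l k + l (k+1) ≤ (runWord c l k j).length := by
  rw [runWord_cons c l (by omega), runWord_cons c l (by omega : k + 1 < j)]
  simp

theorem getElem_of_eq' {A B : List α} (h : A = B) {i : ℕ} (hi : i < A.length) :
    A[i]'hi = B[i]'(h ▸ hi) := by subst h; rfl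

/-- First letter of a (possibly partial-final-block) run word. -/
theorem runWord_firstChar {k r m : ℕ} (hl : ∀ t, k ≤ t → t < k + r → 1 ≤ l t)
    (h0 : 0 < (runWord c l k (k+r) ++ List.replicate m (c (k+r))).length) :
    (runWord c l k (k+r) ++ List.replicate m (c (k+r)))[0]'h0 = c k := by
  rcases Nat.eq_zero_or_pos r with hr | hr
  · subst hr
    have e : runWord c l k (k+0) ++ List.replicate m (c (k+0)) = List.replicate m (c k) := by
      rw [Nat.add_zero, runWord_nil, List.nil_append]
    rw [getElem_of_eq' e h0, List.getElem_replicate]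
  · have hc : k < k + r := by omega
    have e : runWord c l k (k+r) ++ List.replicate m (c (k+r))
        = List.replicate (l k) (c k) ++ (runWord c l (k+1) (k+r) ++ List.replicate m (c (k+r))) := by
      rw [runWord_cons c l hc, List.append_assoc]
    have hlk : 1 ≤ l k := hl k (le_refl _) hc
    rw [getElem_of_eq' e h0,
        List.getElem_append_left (by simp; omega : 0 < (List.replicate (l k) (c k)).length),
        List.getElem_replicate]

/-- Last letter of a word ending in a nonempty replicate block. -/
theorem getLast_append_replicate {u : List α} {a : α} {m : ℕ} (hm : 1 ≤ m)
    (h : u ++ List.replicate m a ≠ []) : (u ++ List.replicate m a).getLast h = a := by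
  obtain ⟨n, rfl⟩ : ∃ n, m = n + 1 := ⟨m - 1, by omega⟩
  have e : u ++ List.replicate (n+1) a = (u ++ List.replicate n a) ++ [a] := by
    rw [List.replicate_succ', List.append_assoc]
  rw [List.getLast_congr _ _ e, List.getLast_concat]
  simp

theorem runWord_getLast {k j : ℕ} (hkj : k < j) (hl : 1 ≤ l (j-1))
    (h : runWord c l k j ≠ []) : (runWord c l k j).getLast h = c (j-1) := by
  have e : runWord c l k j = runWord c l k (j-1) ++ List.replicate (l (j-1)) (c (j-1)) := by
    have := runWord_succ c l (by omega : k ≤ j - 1)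
    rwa [show j - 1 + 1 = j by omega] at this
  rw [List.getLast_congr _ _ e, getLast_append_replicate hl]
  rw [← e]; exact h

end RunWord

section NumRuns
variable (c : ℕ → α) (l : ℕ → ℕ)

theorem numRuns_replicate (m : ℕ) (a : α) :
    numRuns (List.replicate m a) = if 0 < m then 1 else 0 := by
  induction m with
  | zero => simp [numRuns]
  | succ n ih =>
    simp only [Nat.succ_ne_zero, if_pos (Nat.succ_pos n)]
    rcases Nat.eq_zero_or_pos n with h | h
    · subst h; simp [numRuns, List.destutter]
    · obtain ⟨p, rfl⟩ : ∃ p, n = p + 1 := ⟨n - 1, by omega⟩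
      have e : List.replicate (p+1+1) a = a :: a :: List.replicate p a := by
        simp [List.replicate_succ]
      rw [numRuns, e, List.destutter_cons_cons, if_neg (by simp)]
      rw [if_pos h] at ih
      rw [numRuns, List.replicate_succ, List.destutter_cons'] at ih
      exact ih

theorem numRuns_replicate_append {n : ℕ} (hn : 1 ≤ n) (a : α) (v : List α)
    (hv : ∀ (h : 0 < v.length), v[0]'h ≠ a) :
    numRuns (List.replicate n a ++ v) = 1 + numRuns v := by
  induction n with
  | zero => omega
  | succ p ih =>
    rcases Nat.eq_zero_or_pos p with h | h
    · subst h
      match v with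
      | [] => simp [numRuns, List.destutter]
      | x :: v' =>
        have hxa : x ≠ a := by exact hv (by simp)
        have e : List.replicate 1 a ++ x :: v' = a :: x :: v' := by simp
        rw [e, numRuns, List.destutter_cons_cons, if_pos (by simp [Ne, hxa]; tauto),
            numRuns, List.destutter_cons']
        simp [Nat.add_comm]
    · have e : List.replicate (p+1) a ++ v = a :: (List.replicate p a ++ v) := by
        simp [List.replicate_succ]
      obtain ⟨q, rfl⟩ : ∃ q, p = q + 1 := ⟨p - 1, by omega⟩
      have e2 : List.replicate (q+1) a ++ v = a :: (List.replicate q a ++ v) := by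
        simp [List.replicate_succ]
      rw [e, numRuns, e2, List.destutter_cons_cons, if_neg (by simp)]
      have e3 : numRuns (List.replicate (q+1) a ++ v)
          = (List.destutter' (· ≠ ·) a (List.replicate q a ++ v)).length := by
        rw [numRuns, e2, List.destutter_cons']
      rw [← e3]
      exact ih h

theorem numRuns_runWord {r : ℕ} : ∀ (k m : ℕ), (∀ t, k ≤ t → t < k + r → 1 ≤ l t) →
    (∀ t, k ≤ t → t < k + r → c t ≠ c (t+1)) →
    numRuns (runWord c l k (k+r) ++ List.replicate m (c (k+r)))
      = r + if 0 < m then 1 else 0 := by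
  induction r with
  | zero =>
    intro k m _ _
    rw [Nat.add_zero, runWord_nil, List.nil_append, numRuns_replicate]
    omega
  | succ r ih =>
    intro k m hl hc
    have e : runWord c l k (k+(r+1)) ++ List.replicate m (c (k+(r+1)))
        = List.replicate (l k) (c k)
          ++ (runWord c l (k+1) ((k+1)+r) ++ List.replicate m (c ((k+1)+r))) := by
      rw [runWord_cons c l (by omega : k < k + (r+1)), List.append_assoc,
          show k + (r+1) = (k+1)+r by omega]
    rw [e, numRuns_replicate_append (hl k (le_refl _) (by omega)) _ _ ?hv]
    · rw [ih (k+1) m (fun t h1 h2 => hl t (by omega) (by omega))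
          (fun t h1 h2 => hc t (by omega) (by omega))]
      omega
    case hv =>
      intro h0
      rw [runWord_firstChar c l (fun t h1 h2 => hl t (by omega) (by omega)) h0]
      exact (hc k (le_refl _) (by omega)).symm

end NumRuns

section Decomp

theorem prefix_append_cases {b X Y : List α} (h : b <+: X ++ Y) :
    b <+: X ∨ ∃ b', b = X ++ b' ∧ b' <+: Y := by
  rcases le_or_gt b.length X.length with hc | hc
  · exact Or.inl (List.prefix_of_prefix_length_le h (X.prefix_append Y) hc)
  · right
    have hXb : X <+: b :=
      List.prefix_of_prefix_length_le (X.prefix_append Y) h (by omega)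
    obtain ⟨b', rfl⟩ := hXb
    exact ⟨b', rfl, (List.prefix_append_right_inj X).mp h⟩

theorem suffix_append_cases {b X Y : List α} (h : b <:+ X ++ Y) :
    b <:+ Y ∨ ∃ v', v' <:+ X ∧ v' ≠ [] ∧ b = v' ++ Y := by
  rcases le_or_gt b.length Y.length with hc | hc
  · exact Or.inl (List.suffix_of_suffix_length_le h (List.suffix_append X Y) hc)
  · right
    have hYb : Y <:+ b :=
      List.suffix_of_suffix_length_le (List.suffix_append X Y) h (by omega)
    obtain ⟨v', rfl⟩ := hYb
    refine ⟨v', ?_, ?_, rfl⟩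
    · obtain ⟨t, ht⟩ := h
      rw [← List.append_assoc] at ht
      exact ⟨t, List.append_cancel_right ht⟩
    · intro hnil
      subst hnil
      simp at hc

theorem prefix_replicate {b : List α} {n : ℕ} {a : α} (h : b <+: List.replicate n a) :
    b = List.replicate b.length a ∧ b.length ≤ n :=
  ⟨List.eq_replicate_length.mpr fun x hx => List.eq_of_mem_replicate (h.sublist.mem hx),
   by simpa using h.length_le⟩

theorem suffix_replicate {b : List α} {n : ℕ} {a : α} (h : b <:+ List.replicate n a) :
    b = List.replicate b.length a ∧ b.length ≤ n :=
  ⟨List.eq_replicate_length.mpr fun x hx => List.eq_of_mem_replicate (h.sublist.mem hx),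
   by simpa using h.length_le⟩

theorem replicate_prefix_replicate {a : α} {s n : ℕ} (h : s ≤ n) :
    List.replicate s a <+: List.replicate n a :=
  ⟨List.replicate (n - s) a, by rw [← List.replicate_add]; congr 1; omega⟩

theorem replicate_suffix_replicate {a : α} {s n : ℕ} (h : s ≤ n) :
    List.replicate s a <:+ List.replicate n a :=
  ⟨List.replicate (n - s) a, by rw [← List.replicate_add]; congr 1; omega⟩

/-- Uniqueness of the final run decomposition. -/
theorem final_run_unique_aux {u1 u2 : List α} {a : α} {m1 m2 : ℕ} (hm1 : 1 ≤ m1)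
    (hle : m1 ≤ m2)
    (h : u1 ++ List.replicate m1 a = u2 ++ List.replicate m2 a)
    (h1 : ∀ (hne : u1 ≠ []), u1.getLast hne ≠ a) :
    m1 = m2 ∧ u1 = u2 := by
  have e : u2 ++ List.replicate m2 a = (u2 ++ List.replicate (m2 - m1) a) ++ List.replicate m1 a := by
    rw [List.append_assoc, ← List.replicate_add]
    congr 2
    omega
  rw [e] at h
  have hu : u1 = u2 ++ List.replicate (m2 - m1) a := List.append_cancel_right h
  rcases Nat.eq_zero_or_pos (m2 - m1) with hz | hz
  · rw [hz] at hu
    simp at hu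
    exact ⟨by omega, hu⟩
  · exfalso
    have hne : u1 ≠ [] := by
      rw [hu]
      intro hc
      have := congrArg List.length hc
      simp at this
      omega
    apply h1 hne
    rw [List.getLast_congr _ (by rw [← hu]; exact hne) hu]
    exact getLast_append_replicate hz _

theorem final_run_unique {u1 u2 : List α} {a1 a2 : α} {m1 m2 : ℕ} (hm1 : 1 ≤ m1) (hm2 : 1 ≤ m2)
    (h : u1 ++ List.replicate m1 a1 = u2 ++ List.replicate m2 a2)
    (h1 : ∀ (hne : u1 ≠ []), u1.getLast hne ≠ a1)
    (h2 : ∀ (hne : u2 ≠ []), u2.getLast hne ≠ a2) :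
    a1 = a2 ∧ m1 = m2 ∧ u1 = u2 := by
  have hne1 : u1 ++ List.replicate m1 a1 ≠ [] := by
    intro hc; have := congrArg List.length hc; simp at this; omega
  have ha : a1 = a2 := by
    have e1 : (u1 ++ List.replicate m1 a1).getLast hne1 = a1 := getLast_append_replicate hm1 _
    have e2 : (u1 ++ List.replicate m1 a1).getLast hne1 = a2 := by
      rw [List.getLast_congr _ (by rw [← h]; exact hne1) h]
      exact getLast_append_replicate hm2 _
    rw [← e1, e2]
  subst ha
  rcases le_total m1 m2 with hle | hle
  · obtain ⟨hm, hu⟩ := final_run_unique_aux hm1 hle h h1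
    exact ⟨rfl, hm, hu⟩
  · obtain ⟨hm, hu⟩ := final_run_unique_aux hm2 hle h.symm h2
    exact ⟨rfl, hm.symm, hu.symm⟩

end Decomp

section RunWord2
variable (c : ℕ → α) (l : ℕ → ℕ)

theorem runWord_prefix : ∀ (n k : ℕ) (b : List α), (∀ t, k ≤ t → t < k + n → 1 ≤ l t) →
    b <+: runWord c l k (k + n) →
    b = runWord c l k (k + n) ∨
      ∃ r m, r < n ∧ m < l (k + r) ∧
        b = runWord c l k (k + r) ++ List.replicate m (c (k + r)) := by
  intro n
  induction n with
  | zero =>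
    intro k b _ hpre
    rw [Nat.add_zero, runWord_nil] at hpre ⊢
    left
    simpa using hpre.length_le.antisymm (by simp)
  | succ n ih =>
    intro k b hl hpre
    rw [runWord_cons c l (by omega : k < k + (n+1))] at hpre
    rcases prefix_append_cases hpre with hc | ⟨b', rfl, hb'⟩
    · obtain ⟨hb, hble⟩ := prefix_replicate hc
      rcases eq_or_lt_of_le hble with heq | hlt
      · -- full first block
        rcases Nat.eq_zero_or_pos n with hn | hn
        · left
          rw [runWord_cons c l (by omega : k < k + (n+1)), hn] at *
          rw [hb, heq, show k + (0+1) = k + 1 by omega, runWord_nil, List.append_nil]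
        · right
          refine ⟨1, 0, by omega, hl (k+1) (by omega) (by omega), ?_⟩
          rw [hb, heq, List.replicate_zero, List.append_nil]
          have : runWord c l k (k+1) = List.replicate (l k) (c k) := by
            rw [runWord_cons c l (by omega : k < k + 1), runWord_nil, List.append_nil]
          rw [this]
      · right
        exact ⟨0, b.length, by omega, by rwa [Nat.add_zero], by
          rw [Nat.add_zero, runWord_nil, List.nil_append]; exact hb⟩
    · have hkn : k + (n+1) = (k+1) + n := by omega
      rw [hkn] at hb'
      rcases ih (k+1) b' (fun t h1 h2 => hl t (by omega) (by omega)) hb' with hfull | ⟨r, m, hr, hm, hbeq⟩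
      · left
        rw [hfull, runWord_cons c l (by omega : k < k + (n+1)), hkn]
      · right
        refine ⟨r+1, m, by omega, ?_, ?_⟩
        · rwa [show k + (r+1) = k + 1 + r by omega]
        · rw [hbeq, ← List.append_assoc, show k + (r+1) = k + 1 + r by omega,
              ← runWord_cons c l (by omega : k < k + 1 + r)]

theorem runWord_getElem_next {k r j m : ℕ} (hrj : k + r < j) (hm : m < l (k + r))
    (hpos : (runWord c l k (k+r)).length + m < (runWord c l k j).length) :
    (runWord c l k j)[(runWord c l k (k+r)).length + m]'hpos = c (k + r) := by
  have e : runWord c l k j = runWord c l k (k+r) ++ runWord c l (k+r) j :=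
    runWord_split c l (by omega) (by omega)
  rw [getElem_of_eq' e hpos, List.getElem_append_right (by omega)]
  have e2 : runWord c l (k+r) j
      = List.replicate (l (k+r)) (c (k+r)) ++ runWord c l (k+r+1) j :=
    runWord_cons c l hrj
  rw [getElem_of_eq' e2 _, List.getElem_append_left (by simp; omega), List.getElem_replicate]

end RunWord2

section OB
variable {c : ℕ → α} {l : ℕ → ℕ}

/-- Suffix-side analysis of the maximal border of a run word. -/
theorem border_final_run {k j p M : ℕ} {b : List α} (hkj2 : k + 2 ≤ j)
    (hlpos : ∀ t, k ≤ t → t ≤ j → 1 ≤ l t)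
    (hcne : ∀ t, k ≤ t → t < j → c t ≠ c (t + 1))
    (hb : IsBorder b (runWord c l k j))
    (hbmax : ∀ b', IsBorder b' (runWord c l k j) → b'.length ≤ b.length)
    (hp : k ≤ p) (hpj : p < j) (hM1 : 1 ≤ M) (hMle : M ≤ l p)
    (hbeq : b = runWord c l k p ++ List.replicate M (c p)) :
    M ≤ l (j-1) ∧ (M < l p → M = l (j-1)) := by
  have hw'eq : runWord c l k j
      = runWord c l k (j-1) ++ List.replicate (l (j-1)) (c (j-1)) := by
    rw [← runWord_succ c l (by omega : k ≤ j - 1), show j - 1 + 1 = j by omega]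
  have hblen : b.length = (runWord c l k p).length + M := by rw [hbeq]; simp
  have hbpos : 0 < b.length := by omega
  have hbsuf : b <:+ runWord c l k (j-1) ++ List.replicate (l (j-1)) (c (j-1)) :=
    hw'eq ▸ hb.2.1
  have hjm1 : 1 ≤ l (j-1) := hlpos (j-1) (by omega) (by omega)
  rcases suffix_append_cases hbsuf with hcase | ⟨v', hv'V, hv'ne, hbeq2⟩
  · -- b is a suffix of the last block
    obtain ⟨hbrep, hble⟩ := suffix_replicate hcase
    rcases eq_or_lt_of_le hp with hpk | hpk
    · -- p = k : b is a replicate of c k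
      subst hpk
      have hbrepk : b = List.replicate M (c k) := by
        rw [hbeq, runWord_nil, List.nil_append]
      have hMb : b.length = M := by rw [hbrepk]; simp
      have hck : c k = c (j-1) := by
        have e1 : b[0]'hbpos = c k := by rw [getElem_of_eq' hbrepk hbpos, List.getElem_replicate]
        have e2 : b[0]'hbpos = c (j-1) := by rw [getElem_of_eq' hbrep hbpos, List.getElem_replicate]
        rw [← e1, e2]
      constructor
      · omega
      · intro hMlt
        by_contra hne
        have hMltj : M < l (j-1) := by omega
        -- the longer border (c k)^(M+1)
        have hb2 : IsBorder (List.replicate (M+1) (c k)) (runWord c l k j) := by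
          refine ⟨?_, ?_, ?_⟩
          · apply (replicate_prefix_replicate (show M+1 ≤ l k by omega)).trans
            rw [runWord_cons c l (by omega : k < j)]
            exact (List.replicate (l k) (c k)).prefix_append _
          · rw [hck]
            apply (replicate_suffix_replicate (show M+1 ≤ l (j-1) by omega)).trans
            rw [hw'eq]
            exact List.suffix_append _ _
          · have h2 := runWord_length_ge2 c l hkj2
            have h3 := hlpos (k+1) (by omega) (by omega)
            simp only [List.length_replicate]
            omega
        have := hbmax _ hb2
        simp at this
        omega
    · -- p > k : b would be a replicate but contains two distinct letters
      exfalso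
      have hbeq' : b = runWord c l k (k + (p-k)) ++ List.replicate M (c (k + (p-k))) := by
        rwa [show k + (p-k) = p by omega]
      have e0 : b[0]'hbpos = c k :=
        getElem_of_eq' hbeq' hbpos ▸
          runWord_firstChar c l (fun t h1 h2 => hlpos t (by omega) (by omega))
            (by rw [← hbeq']; exact hbpos)
      -- second letter at position l k
      have hUsplit : b = List.replicate (l k) (c k)
          ++ (runWord c l (k+1) ((k+1) + (p-k-1)) ++ List.replicate M (c ((k+1) + (p-k-1)))) := by
        rw [hbeq, runWord_cons c l (by omega : k < p), List.append_assoc,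
            show (k+1) + (p-k-1) = p by omega]
      have hYpos : 0 < (runWord c l (k+1) ((k+1) + (p-k-1))
          ++ List.replicate M (c ((k+1) + (p-k-1)))).length := by
        simp only [List.length_append, List.length_replicate]
        omega
      have hlkb : l k < b.length := by
        have := congrArg List.length hUsplit
        simp only [List.length_append, List.length_replicate] at this
        omega
      have e1 : b[l k]'hlkb = c (k+1) := by
        rw [getElem_of_eq' hUsplit hlkb,
            List.getElem_append_right (by simp : (List.replicate (l k) (c k)).length ≤ l k)]
        have h5 := runWord_firstChar c l
          (fun t h1 h2 => hlpos t (by omega) (by omega)) hYpos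
        rw [← h5]
        exact ge_congr _ (by simp)
      have u0 : b[0]'hbpos = c (j-1) := by
        rw [getElem_of_eq' hbrep hbpos, List.getElem_replicate]
      have u1 : b[l k]'hlkb = c (j-1) := by
        rw [getElem_of_eq' hbrep hlkb, List.getElem_replicate]
      exact hcne k (le_refl _) (by omega) (by rw [← e0, u0, ← u1, e1])
  · -- b = v' ++ R with v' a nonempty suffix of the earlier runs
    have h1 : ∀ (hne : runWord c l k p ≠ []), (runWord c l k p).getLast hne ≠ c p := by
      intro hne
      rcases eq_or_lt_of_le hp with hpk | hpk
      · exfalso; apply hne; rw [← hpk, runWord_nil]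
      · rw [runWord_getLast c l hpk (hlpos (p-1) (by omega) (by omega)) hne]
        have := hcne (p-1) (by omega) (by omega)
        rwa [show p - 1 + 1 = p by omega] at this
    have h2 : ∀ (hne : v' ≠ []), v'.getLast hne ≠ c (j-1) := by
      intro hne
      obtain ⟨x, hx⟩ := hv'V
      have hVne : runWord c l k (j-1) ≠ [] := by
        rw [← hx]
        intro hcc
        exact hne (List.append_eq_nil_iff.mp hcc).2
      have e : (runWord c l k (j-1)).getLast hVne = v'.getLast hne := by
        rw [List.getLast_congr _ (show x ++ v' ≠ [] by rw [hx]; exact hVne) hx.symm,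
            List.getLast_append]
        simp [hne]
      rw [← e, runWord_getLast c l (by omega : k < j - 1)
            (hlpos (j-1-1) (by omega) (by omega)) hVne]
      have := hcne (j-2) (by omega) (by omega)
      rw [show j - 1 - 1 = j - 2 by omega]
      rwa [show j - 2 + 1 = j - 1 by omega] at this
    obtain ⟨_, hMeq, _⟩ := final_run_unique hM1 hjm1 (hbeq.symm.trans hbeq2) h1 h2
    exact ⟨by omega, fun _ => hMeq⟩

end OB


end AuxLemmas

/-- Under the run invariant, if `c_j > c_s` then
`c_k^{l_k} ⋯ c_{j-1}^{l_{j-1}} c_j^{l_j} ∈ L'` and its longest border is empty. -/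
theorem rle_next_case2 [LinearOrder α] (c : ℕ → α) (l : ℕ → ℕ) (k j : ℕ) (hkj : k < j)
    (hlpos : ∀ t, k ≤ t → t ≤ j → 1 ≤ l t)
    (hcne : ∀ t, k ≤ t → t < j → c t ≠ c (t + 1))
    (hP' : InP' (runWord c l k j))
    (b : List α) (hb : IsBorder b (runWord c l k j))
    (hbmax : ∀ b' : List α, IsBorder b' (runWord c l k j) → b'.length ≤ b.length)
    (ℓ i z s : ℕ)
    (hℓ : ℓ = if 1 < j - k then numRuns b else 0)
    (hi : i = k + ℓ)
    (hz : z = if 0 < ℓ ∧ l (j - 1) < l (i - 1) then 1 else 0)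
    (hs : s = i - z)
    (hgt : c s < c j) :
    IsLR (runWord c l k (j + 1)) ∧
      ∀ b' : List α, IsBorder b' (runWord c l k (j + 1)) → b' = [] := by
  subst hs hz hi hℓ
  -- prefix structure of the border
  have hkn : k + (j - k) = j := by omega
  rcases runWord_prefix c l (j-k) k b (fun t h1 h2 => hlpos t h1 (by omega))
      (by rw [hkn]; exact hb.1) with hfull | ⟨r, m, hr, hm, hbeq⟩
  · exfalso
    have := congrArg List.length hfull
    rw [hkn] at this
    have := hb.2.2
    omega
  have hrj : k + r < j := by omega
  have hblen2 : b.length = (runWord c l k (k+r)).length + m := by rw [hbeq]; simp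
  -- the character following the border
  have hchar : (runWord c l k j)[b.length]'(hb.2.2) = c (k+r) := by
    rw [ge_congr _ hblen2]
    exact runWord_getElem_next c l hrj hm (by rw [← hblen2]; exact hb.2.2)
  -- compute s = k + r
  have hsval : k + (if 1 < j - k then numRuns b else 0)
      - (if 0 < (if 1 < j - k then numRuns b else 0) ∧
          l (j-1) < l (k + (if 1 < j - k then numRuns b else 0) - 1) then 1 else 0)
      = k + r := by
    by_cases hjk : 1 < j - k
    · rw [if_pos hjk]
      have hnum : numRuns b = r + if 0 < m then 1 else 0 := by
        rw [hbeq]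
        exact numRuns_runWord c l k m (fun t h1 h2 => hlpos t h1 (by omega))
          (fun t h1 h2 => hcne t h1 (by omega))
      rcases Nat.eq_zero_or_pos m with hm0 | hm0
      · -- full blocks only
        rcases Nat.eq_zero_or_pos r with hr0 | hr0
        · have hnb : numRuns b = 0 := by rw [hnum, hm0, hr0]; simp
          rw [hnb, hr0]
          simp
        · have hbeq' : b = runWord c l k (k+r-1) ++ List.replicate (l (k+r-1)) (c (k+r-1)) := by
            rw [hbeq, hm0, List.replicate_zero, List.append_nil,
                ← runWord_succ c l (by omega : k ≤ k + r - 1), show k+r-1+1 = k+r by omega]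
          obtain ⟨hle, _⟩ := border_final_run (by omega) hlpos hcne hb hbmax
            (by omega : k ≤ k+r-1) (by omega) (hlpos (k+r-1) (by omega) (by omega))
            (le_refl _) hbeq'
          have hnb : numRuns b = r := by rw [hnum, hm0]; simp
          rw [hnb, if_neg]
          · omega
          · rintro ⟨-, hcon⟩
            omega
      · -- partial final block
        obtain ⟨-, himp⟩ := border_final_run (by omega) hlpos hcne hb hbmax
          (by omega : k ≤ k+r) (by omega) hm0 (le_of_lt hm) hbeq
        have hjr := himp hm
        have hnb : numRuns b = r + 1 := by rw [hnum, if_pos hm0]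
        rw [hnb, if_pos]
        · omega
        · refine ⟨by omega, ?_⟩
          rw [show k + (r + 1) - 1 = k + r by omega]
          omega
    · -- j = k + 1
      rw [if_neg hjk]
      have hr0 : r = 0 := by omega
      subst hr0
      simp
  rw [hsval] at hgt
  -- w' is a prefix of a Lyndon word
  have hInP : InP (runWord c l k j) := by
    rcases hP' with h | ⟨cc, K, hK2, hcmax, hweq⟩
    · exact h
    · exfalso
      have : (runWord c l k j)[b.length]'(hb.2.2) = cc := by
        rw [getElem_of_eq' hweq hb.2.2, List.getElem_replicate]
      rw [hchar] at this
      rw [this] at hgt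
      exact absurd hgt (not_lt.mpr (hcmax (c j)))
  -- main conclusion
  have hlj : 1 ≤ l j := hlpos j (by omega) (le_refl _)
  have hLyndon : IsLyndon (runWord c l k j ++ List.replicate (l j) (c j)) := by
    apply lyndon_extend hInP hb hbmax _ hlj
    rw [hchar]
    exact hgt
  have hrun : runWord c l k (j+1) = runWord c l k j ++ List.replicate (l j) (c j) :=
    runWord_succ c l (le_of_lt hkj)
  constructor
  · left
    rw [hrun]
    exact hLyndon
  · intro b' hb'
    rw [hrun] at hb'
    exact hLyndon.unbordered hb'
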